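/- Let S be a Clifford module with positive definite Hermitian product ⟨·,·⟩, indefinite product (ψ,φ) = ⟨e_0·ψ,φ⟩, and Clifford multiplication by an orthonormal Minkowski frame e_0, e_1, …, e_n (e_0· Hermitian, e_i· skew-Hermitian). For ψ ∈ S, define V = ⟨ψ,ψ⟩ and W_j = (e_j·ψ, ψ) for j = 1, …, n. Then Σ_j W_j² ≤ V². Moreover, if ψ ≠ 0 then the spinors e_1·ψ, …, e_n·ψ form an orthogonal family with respect to the real part of ⟨·,·⟩, each of squared norm V. -/

import Mathlib

local notation "⟪" x ", " y "⟫" => @inner ℂ _ _ x y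

/-- With V = ⟨ψ,ψ⟩ and W_j = (e_j·ψ,ψ) = ⟨e_0·e_j·ψ,ψ⟩, one has Σ_j W_j² ≤ V²;
moreover if ψ ≠ 0 the spinors e_j·ψ are Re⟨·,·⟩-orthogonal, each of squared norm V. -/
theorem stmt8 (n : ℕ) (S : Type*) [NormedAddCommGroup S] [InnerProductSpace ℂ S]
    (e : Fin (n + 1) → (S →ₗ[ℂ] S))
    (hcl : ∀ α β : Fin (n + 1), e α ∘ₗ e β + e β ∘ₗ e α
      = ((-2 : ℂ) * (if α = β then (if α = 0 then -1 else 1) else 0)) • LinearMap.id)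
    (he0 : ∀ ψ φ : S, ⟪e 0 ψ, φ⟫ = ⟪ψ, e 0 φ⟫)
    (hskew : ∀ (i : Fin n) (ψ φ : S), ⟪e i.succ ψ, φ⟫ = -⟪ψ, e i.succ φ⟫)
    (ψ : S) :
    (∑ j : Fin n, ((⟪e 0 (e j.succ ψ), ψ⟫).re) ^ 2 ≤ (‖ψ‖ ^ 2) ^ 2) ∧
    (ψ ≠ 0 → ∀ i j : Fin n,
      (i ≠ j → (⟪e i.succ ψ, e j.succ ψ⟫).re = 0) ∧ ‖e j.succ ψ‖ ^ 2 = ‖ψ‖ ^ 2) := by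
  have happ : ∀ α β : Fin (n + 1), ∀ x : S, e α (e β x) + e β (e α x)
      = ((-2 : ℂ) * (if α = β then (if α = 0 then -1 else 1) else 0)) • x := by
    intro α β x
    have := congrArg (fun f : S →ₗ[ℂ] S => f x) (hcl α β)
    simpa only [LinearMap.add_apply, LinearMap.coe_comp, Function.comp_apply,
      LinearMap.smul_apply, LinearMap.id_coe, id_eq] using this
  -- e_j e_j ψ = -ψ
  have hjj : ∀ j : Fin n, e j.succ (e j.succ ψ) = -ψ := by
    intro j
    have h := happ j.succ j.succ ψ
    rw [if_pos rfl, if_neg (Fin.succ_ne_zero j), mul_one] at h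
    have h2 : (2 : ℂ) • e j.succ (e j.succ ψ) = (2 : ℂ) • (-ψ) := by
      rw [two_smul, h]; module
    exact smul_right_injective S two_ne_zero h2
  -- anticommutation for i ≠ j
  have hanti : ∀ i j : Fin n, i ≠ j →
      e i.succ (e j.succ ψ) + e j.succ (e i.succ ψ) = 0 := by
    intro i j hij
    have h := happ i.succ j.succ ψ
    rw [if_neg (by simpa [Fin.succ_inj] using hij)] at h
    simpa using h
  -- e_0 e_0 ψ = ψ
  have h00 : ∀ x : S, e 0 (e 0 x) = x := by
    intro x
    have h := happ 0 0 x
    rw [if_pos rfl, if_pos rfl, mul_neg_one, neg_neg] at h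
    have h2 : (2 : ℂ) • e 0 (e 0 x) = (2 : ℂ) • x := by
      rw [two_smul, h]
    exact smul_right_injective S two_ne_zero h2
  have hself : ∀ x : S, (⟪x, x⟫).re = ‖x‖ ^ 2 := by
    intro x
    rw [inner_self_eq_norm_sq_to_K (𝕜 := ℂ)]
    simp [← Complex.ofReal_pow]
  -- squared norms
  have hinnerjj : ∀ j : Fin n, ⟪e j.succ ψ, e j.succ ψ⟫ = ⟪ψ, ψ⟫ := by
    intro j
    rw [hskew j, hjj j, inner_neg_right, neg_neg]
  have hnormj : ∀ j : Fin n, ‖e j.succ ψ‖ ^ 2 = ‖ψ‖ ^ 2 := by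
    intro j
    have := congrArg Complex.re (hinnerjj j)
    rwa [hself, hself] at this
  -- orthogonality
  have horth : ∀ i j : Fin n, i ≠ j → (⟪e i.succ ψ, e j.succ ψ⟫).re = 0 := by
    intro i j hij
    have h1 : ⟪e i.succ ψ, e j.succ ψ⟫ = -⟪ψ, e i.succ (e j.succ ψ)⟫ := hskew i ψ _
    have h2 : ⟪e j.succ ψ, e i.succ ψ⟫ = -⟪ψ, e j.succ (e i.succ ψ)⟫ := hskew j ψ _
    have hsum : ⟪e i.succ ψ, e j.succ ψ⟫ + ⟪e j.succ ψ, e i.succ ψ⟫ = 0 := by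
      rw [h1, h2, ← neg_add, ← inner_add_right, hanti i j hij, inner_zero_right, neg_zero]
    have hre : (⟪e j.succ ψ, e i.succ ψ⟫).re = (⟪e i.succ ψ, e j.succ ψ⟫).re := by
      rw [← inner_conj_symm, Complex.conj_re]
    have := congrArg Complex.re hsum
    simp only [Complex.add_re, hre, Complex.zero_re] at this
    linarith
  have hnorm0 : ‖e 0 ψ‖ ^ 2 = ‖ψ‖ ^ 2 := by
    have h : ⟪e 0 ψ, e 0 ψ⟫ = ⟪ψ, ψ⟫ := by rw [he0, h00]
    have := congrArg Complex.re h
    rwa [hself, hself] at this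
  refine ⟨?_, fun _ i j => ⟨horth i j, hnormj j⟩⟩
  -- Bessel part
  by_cases hψ : ψ = 0
  · simp [hψ]
  have hψn : (0 : ℝ) < ‖ψ‖ := norm_pos_iff.mpr hψ
  letI : InnerProductSpace ℝ S := InnerProductSpace.complexToReal
  set v : Fin n → S := fun j => (‖ψ‖⁻¹ : ℝ) • e j.succ ψ with hv
  have hreal : ∀ x y : S, (inner ℝ x y : ℝ) = (⟪x, y⟫).re := fun x y => rfl
  have hov : Orthonormal ℝ v := by
    rw [orthonormal_iff_ite]
    intro i j
    rw [hv]
    simp only [real_inner_smul_left, real_inner_smul_right]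
    rw [hreal]
    by_cases hij : i = j
    · subst hij
      rw [if_pos rfl]
      rw [show (⟪e i.succ ψ, e i.succ ψ⟫).re = ‖ψ‖ ^ 2 by
        rw [hinnerjj i, hself]]
      field_simp
    · rw [if_neg hij, horth i j hij]; ring
  have hbessel := hov.sum_inner_products_le (s := Finset.univ) (e 0 ψ)
  have hW : ∀ j : Fin n, (inner ℝ (v j) (e 0 ψ) : ℝ)
      = ‖ψ‖⁻¹ * (⟪e 0 (e j.succ ψ), ψ⟫).re := by
    intro j
    rw [hv]
    simp only [real_inner_smul_left]
    rw [hreal, he0 (e j.succ ψ) ψ]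
  have hsum : ∑ j : Fin n, (‖ψ‖⁻¹ * (⟪e 0 (e j.succ ψ), ψ⟫).re) ^ 2 ≤ ‖ψ‖ ^ 2 := by
    calc ∑ j : Fin n, (‖ψ‖⁻¹ * (⟪e 0 (e j.succ ψ), ψ⟫).re) ^ 2
        = ∑ j : Fin n, ‖(inner ℝ (v j) (e 0 ψ) : ℝ)‖ ^ 2 := by
          refine Finset.sum_congr rfl fun j _ => ?_
          rw [hW j, Real.norm_eq_abs, sq_abs]
      _ ≤ ‖e 0 ψ‖ ^ 2 := hbessel
      _ = ‖ψ‖ ^ 2 := hnorm0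
  have key : ∑ j : Fin n, (‖ψ‖⁻¹ * (⟪e 0 (e j.succ ψ), ψ⟫).re) ^ 2
      = (‖ψ‖ ^ 2)⁻¹ * ∑ j : Fin n, ((⟪e 0 (e j.succ ψ), ψ⟫).re) ^ 2 := by
    rw [Finset.mul_sum]
    refine Finset.sum_congr rfl fun j _ => ?_
    rw [mul_pow]
    ring_nf
  rw [key] at hsum
  have h2 : (0 : ℝ) < ‖ψ‖ ^ 2 := by positivity
  calc ∑ j : Fin n, ((⟪e 0 (e j.succ ψ), ψ⟫).re) ^ 2
      = ‖ψ‖ ^ 2 * ((‖ψ‖ ^ 2)⁻¹ * ∑ j : Fin n, ((⟪e 0 (e j.succ ψ), ψ⟫).re) ^ 2) := by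
        field_simp
    _ ≤ ‖ψ‖ ^ 2 * ‖ψ‖ ^ 2 := by
        exact mul_le_mul_of_nonneg_left hsum (le_of_lt h2)
    _ = (‖ψ‖ ^ 2) ^ 2 := by ring
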